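/- arXiv:2101.10357 — 5 statements merged into one kernel-verified Lean document; each statement's English description precedes it below -/
import Mathlib

section
/- With T_K = [L - K H, -K] and K_0 = L H* (I + H H*)^{-1}, the choice K_0 also minimizes the operator (spectral) norm of T_K over all K; in fact T_K T_K* ⪰ T_{K_0} T_{K_0}* in the positive semidefinite order for every K. -/
open Matrix
open scoped ComplexOrder

/-- The error operator `T_K = [L - K H, -K]`. -/
noncomputable def Terr {m n p : ℕ} (H : Matrix (Fin m) (Fin n) ℂ) (L : Matrix (Fin p) (Fin n) ℂ)
    (K : Matrix (Fin p) (Fin m) ℂ) : Matrix (Fin p) (Fin n ⊕ Fin m) ℂ :=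
  Matrix.fromCols (L - K * H) (-K)

/-- The noncausal estimator `K₀ = L H* (I + H H*)⁻¹`. -/
noncomputable def Kzero {m n p : ℕ} (H : Matrix (Fin m) (Fin n) ℂ)
    (L : Matrix (Fin p) (Fin n) ℂ) : Matrix (Fin p) (Fin m) ℂ :=
  L * Hᴴ * (1 + H * Hᴴ)⁻¹

open scoped Matrix.Norms.L2Operator

private lemma dot_self_eq {ι κ : Type*} [Fintype ι] [Fintype κ]
    (M : Matrix ι κ ℂ) (v : ι → ℂ) :
    star (Mᴴ *ᵥ v) ⬝ᵥ (Mᴴ *ᵥ v) = star v ⬝ᵥ (M * Mᴴ) *ᵥ v := by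
  simp [star_mulVec, conjTranspose_conjTranspose, dotProduct_mulVec, vecMul_vecMul]

private lemma opNorm_le_of_psd {ι κ₁ κ₂ : Type*} [Fintype ι] [DecidableEq ι]
    [Fintype κ₁] [DecidableEq κ₁] [Fintype κ₂] [DecidableEq κ₂]
    {A : Matrix ι κ₁ ℂ} {B : Matrix ι κ₂ ℂ}
    (h : (A * Aᴴ - B * Bᴴ).PosSemidef) : ‖B‖ ≤ ‖A‖ := by
  rw [← B.l2_opNorm_conjTranspose, ← A.l2_opNorm_conjTranspose, l2_opNorm_def, l2_opNorm_def]
  refine ContinuousLinearMap.opNorm_le_bound _ (norm_nonneg _) fun x => ?_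
  refine le_trans ?_ (ContinuousLinearMap.le_opNorm _ x)
  simp only [LinearEquiv.trans_apply, LinearMap.coe_toContinuousLinearMap']
  set v : ι → ℂ := WithLp.ofLp x with hv
  have hB := inner_self_eq_norm_sq_to_K (𝕜 := ℂ) (Matrix.toEuclideanLin Bᴴ x)
  rw [EuclideanSpace.inner_eq_star_dotProduct] at hB
  simp only [ofLp_toEuclideanLin_apply, ← hv] at hB
  rw [dotProduct_comm, dot_self_eq] at hB
  have hA := inner_self_eq_norm_sq_to_K (𝕜 := ℂ) (Matrix.toEuclideanLin Aᴴ x)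
  rw [EuclideanSpace.inner_eq_star_dotProduct] at hA
  simp only [ofLp_toEuclideanLin_apply, ← hv] at hA
  rw [dotProduct_comm, dot_self_eq] at hA
  have hd := h.dotProduct_mulVec_nonneg v
  rw [sub_mulVec, dotProduct_sub, hB, hA] at hd
  have hle := sub_nonneg.mp hd
  have hle' : ‖Matrix.toEuclideanLin Bᴴ x‖ ^ 2 ≤ ‖Matrix.toEuclideanLin Aᴴ x‖ ^ 2 := by
    exact_mod_cast hle
  exact le_of_pow_le_pow_left₀ two_ne_zero (norm_nonneg _) hle'

set_option maxHeartbeats 2000000 in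
/-- `K₀` minimizes the operator (spectral) norm of `T_K`; in fact
`T_K T_K* ⪰ T_{K₀} T_{K₀}*` in the Loewner order for every `K`. -/
theorem kzero_minimizes_opNorm {m n p : ℕ}
    (H : Matrix (Fin m) (Fin n) ℂ) (L : Matrix (Fin p) (Fin n) ℂ)
    (K : Matrix (Fin p) (Fin m) ℂ) :
    (Terr H L K * (Terr H L K)ᴴ - Terr H L (Kzero H L) * (Terr H L (Kzero H L))ᴴ).PosSemidef ∧
      ‖Terr H L (Kzero H L)‖ ≤ ‖Terr H L K‖ := by
  set M : Matrix (Fin m) (Fin m) ℂ := 1 + H * Hᴴ with hMdef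
  have hM : M.PosDef :=
    Matrix.PosDef.add_posSemidef Matrix.PosDef.one (posSemidef_self_mul_conjTranspose H)
  have hdet : IsUnit M.det := hM.det_pos.ne'.isUnit
  set J : Matrix (Fin p) (Fin m) ℂ := Kzero H L with hJ
  have hJM : J * M = L * Hᴴ := by
    rw [hJ, Kzero, ← hMdef, Matrix.mul_assoc, nonsing_inv_mul _ hdet, Matrix.mul_one]
  have hMJ : M * Jᴴ = H * Lᴴ := by
    have := congrArg conjTranspose hJM
    simpa [conjTranspose_mul, hM.isHermitian.eq] using this
  have hexp : ∀ K' : Matrix (Fin p) (Fin m) ℂ,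
      Terr H L K' * (Terr H L K')ᴴ =
        L * Lᴴ - L * Hᴴ * K'ᴴ - K' * (H * Lᴴ) + K' * M * K'ᴴ := by
    intro K'
    simp only [Terr, conjTranspose_fromCols_eq_fromRows_conjTranspose,
      fromCols_mul_fromRows, conjTranspose_sub, conjTranspose_mul, conjTranspose_neg, hMdef,
      Matrix.sub_mul, Matrix.mul_sub, Matrix.add_mul, Matrix.mul_add, Matrix.neg_mul,
      Matrix.mul_neg, neg_neg, Matrix.one_mul, Matrix.mul_one, Matrix.mul_assoc]
    abel
  have heq : Terr H L K * (Terr H L K)ᴴ - Terr H L J * (Terr H L J)ᴴ =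
      (K - J) * M * (K - J)ᴴ := by
    rw [hexp K, hexp J]
    have e1 : J * (H * Lᴴ) = L * Hᴴ * Jᴴ := by
      rw [← hMJ, ← Matrix.mul_assoc, hJM]
    have e2 : J * M * Jᴴ = L * Hᴴ * Jᴴ := by rw [hJM]
    have e3 : K * M * Jᴴ = K * (H * Lᴴ) := by rw [Matrix.mul_assoc, hMJ]
    have e4 : J * M * Kᴴ = L * Hᴴ * Kᴴ := by rw [hJM]
    simp only [conjTranspose_sub, Matrix.sub_mul, Matrix.mul_sub]
    rw [e1, e2, e3, e4]
    abel
  have hpsd : (Terr H L K * (Terr H L K)ᴴ - Terr H L J * (Terr H L J)ᴴ).PosSemidef := by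
    rw [heq]
    exact hM.posSemidef.mul_mul_conjTranspose_same (K - J)
  exact ⟨hpsd, opNorm_le_of_psd hpsd⟩
end

section
/- For every matrix K, the cross term satisfies T_K T_{K_0}* = T_{K_0} T_{K_0}*, i.e., the product T_K T_{K_0}* does not depend on K. -/
open Matrix

open scoped ComplexOrder in
lemma key_aux {m n p : ℕ} (H : Matrix (Fin m) (Fin n) ℂ) (L : Matrix (Fin p) (Fin n) ℂ) :
    (1 + H * Hᴴ) * (Kzero H L)ᴴ = H * Lᴴ := by
  have hpd : (1 + H * Hᴴ).PosDef :=
    Matrix.PosDef.add_posSemidef Matrix.PosDef.one (Matrix.posSemidef_self_mul_conjTranspose H)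
  have hherm : (1 + H * Hᴴ)ᴴ = 1 + H * Hᴴ := hpd.isHermitian
  have hu : (1 + H * Hᴴ) * (1 + H * Hᴴ)⁻¹ = 1 :=
    Matrix.mul_nonsing_inv _ (Matrix.isUnit_iff_isUnit_det _ |>.1 hpd.isUnit)
  rw [Kzero, conjTranspose_mul, conjTranspose_mul, conjTranspose_nonsing_inv, hherm,
    conjTranspose_conjTranspose, ← Matrix.mul_assoc, ← Matrix.mul_assoc, hu, Matrix.one_mul]

lemma cross_aux {m n p : ℕ} (H : Matrix (Fin m) (Fin n) ℂ) (L : Matrix (Fin p) (Fin n) ℂ)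
    (K : Matrix (Fin p) (Fin m) ℂ) :
    (L - K * H) * (L - Kzero H L * H)ᴴ + (-K) * (-(Kzero H L))ᴴ
      = L * (L - Kzero H L * H)ᴴ := by
  have h' : (Kzero H L)ᴴ + H * Hᴴ * (Kzero H L)ᴴ = H * Lᴴ := by
    rw [← key_aux H L, Matrix.add_mul, Matrix.one_mul]
  have h3 : H * (L - Kzero H L * H)ᴴ = (Kzero H L)ᴴ := by
    rw [conjTranspose_sub, conjTranspose_mul, Matrix.mul_sub, ← Matrix.mul_assoc, ← h']
    abel
  have h2 : K * H * (L - Kzero H L * H)ᴴ = K * (Kzero H L)ᴴ := by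
    rw [Matrix.mul_assoc, h3]
  rw [Matrix.sub_mul, h2, Matrix.neg_mul, conjTranspose_neg, Matrix.mul_neg, neg_neg]
  abel

/-- the cross term `T_K T_{K₀}* = T_{K₀} T_{K₀}*` does not depend on `K`. -/
theorem cross_term_invariant {m n p : ℕ}
    (H : Matrix (Fin m) (Fin n) ℂ) (L : Matrix (Fin p) (Fin n) ℂ)
    (K : Matrix (Fin p) (Fin m) ℂ) :
    Terr H L K * (Terr H L (Kzero H L))ᴴ
      = Terr H L (Kzero H L) * (Terr H L (Kzero H L))ᴴ := by
  simp only [Terr, conjTranspose_fromCols_eq_fromRows_conjTranspose,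
    fromCols_mul_fromRows]
  rw [cross_aux H L K, cross_aux H L (Kzero H L)]
end

section
/- The error of the noncausal estimator satisfies T_{K_0} T_{K_0}* = L (I + H* H)^{-1} L*. -/
open Matrix

open ComplexOrder in
lemma aux_isUnit_one_add_mul_conjTranspose {m n : ℕ} (H : Matrix (Fin m) (Fin n) ℂ) :
    IsUnit (1 + H * Hᴴ) :=
  (Matrix.PosDef.add_posSemidef Matrix.PosDef.one
    (Matrix.posSemidef_self_mul_conjTranspose H)).isUnit

open ComplexOrder in
lemma aux_isUnit_one_add_conjTranspose_mul {m n : ℕ} (H : Matrix (Fin m) (Fin n) ℂ) :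
    IsUnit (1 + Hᴴ * H) :=
  (Matrix.PosDef.add_posSemidef Matrix.PosDef.one
    (Matrix.posSemidef_conjTranspose_mul_self H)).isUnit

/-- `T_{K₀} T_{K₀}* = L (I + H* H)⁻¹ L*`. -/
theorem noncausal_error {m n p : ℕ}
    (H : Matrix (Fin m) (Fin n) ℂ) (L : Matrix (Fin p) (Fin n) ℂ) :
    Terr H L (Kzero H L) * (Terr H L (Kzero H L))ᴴ
      = L * (1 + Hᴴ * H)⁻¹ * Lᴴ := by
  have hU := aux_isUnit_one_add_mul_conjTranspose H
  have hU' := aux_isUnit_one_add_conjTranspose_mul H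
  set A := (1 + H * Hᴴ)⁻¹ with hA
  set K := Kzero H L with hKdef
  -- A is Hermitian
  have hHerm : Aᴴ = A := by
    rw [hA, Matrix.conjTranspose_nonsing_inv]
    congr 1
    simp [conjTranspose_add]
  -- inverse cancellation
  have hinv : A * (1 + H * Hᴴ) = 1 :=
    Matrix.nonsing_inv_mul _ ((Matrix.isUnit_iff_isUnit_det _).mp hU)
  have hinv' : (1 + H * Hᴴ) * A = 1 :=
    Matrix.mul_nonsing_inv _ ((Matrix.isUnit_iff_isUnit_det _).mp hU)
  -- K * (1 + H Hᴴ) = L Hᴴ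
  have hK : K * (H * Hᴴ) + K = L * Hᴴ := by
    have : K * (1 + H * Hᴴ) = L * Hᴴ := by
      rw [hKdef, Kzero, ← hA, Matrix.mul_assoc, hinv, Matrix.mul_one]
    calc K * (H * Hᴴ) + K = K * (1 + H * Hᴴ) := by
          rw [Matrix.mul_add, Matrix.mul_one]; abel
      _ = L * Hᴴ := this
  -- key identity : (1 + Hᴴ H)⁻¹ = 1 - Hᴴ A H
  have hkey : (1 + Hᴴ * H)⁻¹ = 1 - Hᴴ * A * H := by
    have h2 : (1 + Hᴴ * H) * (1 - Hᴴ * A * H) = 1 := by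
      have hHA : Hᴴ * A + Hᴴ * (H * Hᴴ) * A = Hᴴ := by
        calc Hᴴ * A + Hᴴ * (H * Hᴴ) * A = Hᴴ * ((1 + H * Hᴴ) * A) := by
              simp only [Matrix.add_mul, Matrix.one_mul, Matrix.mul_add, Matrix.mul_one,
                Matrix.mul_assoc]
          _ = Hᴴ := by rw [hinv', Matrix.mul_one]
      have : (1 + Hᴴ * H) * (1 - Hᴴ * A * H)
          = 1 + Hᴴ * H - (Hᴴ * A + Hᴴ * (H * Hᴴ) * A) * H := by
        rw [Matrix.mul_sub, Matrix.mul_one, Matrix.add_mul, Matrix.one_mul, Matrix.add_mul]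
        rw [show Hᴴ * H * (Hᴴ * A * H) = Hᴴ * (H * Hᴴ) * A * H by
          simp only [Matrix.mul_assoc]]
      rw [this, hHA]
      abel
    calc (1 + Hᴴ * H)⁻¹ = (1 + Hᴴ * H)⁻¹ * ((1 + Hᴴ * H) * (1 - Hᴴ * A * H)) := by
          rw [h2, Matrix.mul_one]
      _ = (1 - Hᴴ * A * H) := by
          rw [← Matrix.mul_assoc,
            Matrix.nonsing_inv_mul _ ((Matrix.isUnit_iff_isUnit_det _).mp hU'),
            Matrix.one_mul]
  -- expand the product
  have expand : Terr H L K * (Terr H L K)ᴴ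
      = L * Lᴴ - L * Hᴴ * Kᴴ - K * H * Lᴴ + (K * (H * Hᴴ) + K) * Kᴴ := by
    rw [Terr, conjTranspose_fromCols_eq_fromRows_conjTranspose, fromCols_mul_fromRows]
    simp only [conjTranspose_sub, conjTranspose_mul, conjTranspose_neg, Matrix.sub_mul,
      Matrix.mul_sub, Matrix.neg_mul, Matrix.mul_neg, Matrix.add_mul, neg_neg]
    simp only [Matrix.mul_assoc]
    abel
  rw [expand, hK, hkey]
  have hKH : K * H = L * (Hᴴ * A * H) := by
    rw [hKdef, Kzero, ← hA]; simp only [Matrix.mul_assoc]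
  have hKconj : Kᴴ = A * H * Lᴴ := by
    rw [hKdef, Kzero, ← hA]
    simp only [conjTranspose_mul, hHerm, conjTranspose_conjTranspose, Matrix.mul_assoc]
  rw [hKconj, hKH]
  simp only [Matrix.mul_sub, Matrix.sub_mul, Matrix.mul_one, Matrix.one_mul]
  rw [show L * Hᴴ * (A * H * Lᴴ) = L * (Hᴴ * A * H) * Lᴴ by simp only [Matrix.mul_assoc]]
  abel
end

section
/- For any positive real γ and any matrices K, K_0, H, L as above, the condition T_K* T_K - T_{K_0}* T_{K_0} ⪯ γ² I is equivalent to (K - K_0)(I + H H*)(K - K_0)* ⪯ γ² (I + γ^{-2} L (I + H* H)^{-1} L*)^{-1}. -/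
open Matrix
open scoped ComplexOrder

namespace RegretAux

variable {m n p : ℕ}

lemma smul_psd {k : Type*} [Fintype k] {M : Matrix k k ℂ} {c : ℂ} (hc : 0 ≤ c)
    (hM : M.PosSemidef) : (c • M).PosSemidef := by
  have hcs : star c = c := by
    rw [Complex.star_def, Complex.conj_eq_iff_im]
    exact (Complex.nonneg_iff.mp hc).2.symm
  refine ⟨?_, fun x => ?_⟩
  · rw [IsHermitian, conjTranspose_smul, hcs, hM.1.eq]
  · exact (hM.smul hc).2 x

lemma smul_one_posDef {k : Type*} [Fintype k] [DecidableEq k] {c : ℂ} (hc : 0 < c) :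
    (c • (1 : Matrix k k ℂ)).PosDef := by
  have hcs : star c = c := by
    rw [Complex.star_def, Complex.conj_eq_iff_im]
    exact (Complex.nonneg_iff.mp hc.le).2.symm
  refine ⟨?_, fun x hx => ?_⟩
  · rw [IsHermitian, conjTranspose_smul, hcs, conjTranspose_one]
  · exact (Matrix.PosDef.one.smul hc).2 hx

lemma fromColumns_add {R : Type*} [AddCommMonoid R] {q n₁ n₂ : Type*}
    (A₁ B₁ : Matrix q n₁ R) (A₂ B₂ : Matrix q n₂ R) :
    fromCols A₁ A₂ + fromCols B₁ B₂ = fromCols (A₁ + B₁) (A₂ + B₂) := by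
  ext i j
  cases j <;> simp [fromCols]

lemma posDef_F (H : Matrix (Fin m) (Fin n) ℂ) : (1 + Hᴴ * H).PosDef :=
  Matrix.PosDef.one.add_posSemidef (Matrix.posSemidef_conjTranspose_mul_self H)

lemma posDef_G (H : Matrix (Fin m) (Fin n) ℂ) : (1 + H * Hᴴ).PosDef :=
  Matrix.PosDef.one.add_posSemidef (Matrix.posSemidef_self_mul_conjTranspose H)

lemma Finv_herm (H : Matrix (Fin m) (Fin n) ℂ) : ((1 + Hᴴ * H)⁻¹)ᴴ = (1 + Hᴴ * H)⁻¹ :=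
  (posDef_F H).inv.1.eq

lemma Ginv_herm (H : Matrix (Fin m) (Fin n) ℂ) : ((1 + H * Hᴴ)⁻¹)ᴴ = (1 + H * Hᴴ)⁻¹ :=
  (posDef_G H).inv.1.eq

lemma push_through (H : Matrix (Fin m) (Fin n) ℂ) :
    H * (1 + Hᴴ * H)⁻¹ = (1 + H * Hᴴ)⁻¹ * H := by
  have hFu : IsUnit (1 + Hᴴ * H).det := (Matrix.isUnit_iff_isUnit_det _).mp (posDef_F H).isUnit
  have hGu : IsUnit (1 + H * Hᴴ).det := (Matrix.isUnit_iff_isUnit_det _).mp (posDef_G H).isUnit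
  have key : (1 + H * Hᴴ) * H = H * (1 + Hᴴ * H) := by
    simp [Matrix.mul_add, Matrix.add_mul, Matrix.mul_assoc]
  calc H * (1 + Hᴴ * H)⁻¹
      = ((1 + H * Hᴴ)⁻¹ * (1 + H * Hᴴ)) * (H * (1 + Hᴴ * H)⁻¹) := by
        rw [Matrix.nonsing_inv_mul _ hGu, Matrix.one_mul]
    _ = (1 + H * Hᴴ)⁻¹ * ((H * (1 + Hᴴ * H)) * (1 + Hᴴ * H)⁻¹) := by
        rw [← key]; simp only [Matrix.mul_assoc]
    _ = (1 + H * Hᴴ)⁻¹ * H := by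
        rw [Matrix.mul_assoc, Matrix.mul_nonsing_inv _ hFu, Matrix.mul_one]

lemma L_sub_K0H (H : Matrix (Fin m) (Fin n) ℂ) (L : Matrix (Fin p) (Fin n) ℂ) :
    L - Kzero H L * H = L * (1 + Hᴴ * H)⁻¹ := by
  have hFu : IsUnit (1 + Hᴴ * H).det := (Matrix.isUnit_iff_isUnit_det _).mp (posDef_F H).isUnit
  have h1 : (1 : Matrix (Fin n) (Fin n) ℂ) - Hᴴ * H * (1 + Hᴴ * H)⁻¹ = (1 + Hᴴ * H)⁻¹ := by
    have h := Matrix.mul_nonsing_inv _ hFu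
    rw [Matrix.add_mul, Matrix.one_mul] at h
    exact (eq_sub_of_add_eq h).symm
  calc L - Kzero H L * H
      = L - L * (Hᴴ * H * (1 + Hᴴ * H)⁻¹) := by
        rw [Kzero]
        simp only [Matrix.mul_assoc, ← push_through H]
    _ = L * (1 - Hᴴ * H * (1 + Hᴴ * H)⁻¹) := by
        rw [Matrix.mul_sub, Matrix.mul_one]
    _ = L * (1 + Hᴴ * H)⁻¹ := by rw [h1]

lemma K0_ct (H : Matrix (Fin m) (Fin n) ℂ) (L : Matrix (Fin p) (Fin n) ℂ) :
    (Kzero H L)ᴴ = (1 + H * Hᴴ)⁻¹ * (H * Lᴴ) := by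
  rw [Kzero, conjTranspose_mul, conjTranspose_mul, Ginv_herm, conjTranspose_conjTranspose]

lemma fc_mul_ct {R : Type*} [CommRing R] [StarRing R] {q : Type*} {n₁ n₂ : Type*}
    [Fintype n₁] [Fintype n₂] (A C : Matrix q n₁ R) (B E : Matrix q n₂ R) :
    fromCols A B * (fromCols C E)ᴴ = A * Cᴴ + B * Eᴴ := by
  rw [conjTranspose_fromCols_eq_fromRows_conjTranspose, fromCols_mul_fromRows]

lemma terr_mul_ct (H : Matrix (Fin m) (Fin n) ℂ) (L : Matrix (Fin p) (Fin n) ℂ)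
    (J J' : Matrix (Fin p) (Fin m) ℂ) :
    Terr H L J * (Terr H L J')ᴴ = (L - J * H) * (L - J' * H)ᴴ + J * J'ᴴ := by
  rw [Terr, Terr, fc_mul_ct, conjTranspose_neg, Matrix.neg_mul, Matrix.mul_neg, neg_neg]

lemma push' (H : Matrix (Fin m) (Fin n) ℂ) (X : Matrix (Fin n) (Fin p) ℂ) :
    (1 + H * Hᴴ)⁻¹ * (H * X) = H * ((1 + Hᴴ * H)⁻¹ * X) := by
  rw [← Matrix.mul_assoc, ← push_through H, Matrix.mul_assoc]

lemma TJ_T0 (H : Matrix (Fin m) (Fin n) ℂ) (L : Matrix (Fin p) (Fin n) ℂ)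
    (J : Matrix (Fin p) (Fin m) ℂ) :
    Terr H L J * (Terr H L (Kzero H L))ᴴ = L * (1 + Hᴴ * H)⁻¹ * Lᴴ := by
  rw [terr_mul_ct, L_sub_K0H, K0_ct, conjTranspose_mul, Finv_herm, Matrix.sub_mul, push']
  simp only [Matrix.mul_assoc]
  abel

lemma TK_TK (H : Matrix (Fin m) (Fin n) ℂ) (L : Matrix (Fin p) (Fin n) ℂ)
    (K : Matrix (Fin p) (Fin m) ℂ) :
    Terr H L K * (Terr H L K)ᴴ
      = L * (1 + Hᴴ * H)⁻¹ * Lᴴ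
        + (K - Kzero H L) * (1 + H * Hᴴ) * (K - Kzero H L)ᴴ := by
  set Δ : Matrix (Fin p) (Fin m) ℂ := K - Kzero H L with hΔ
  set D : Matrix (Fin p) (Fin n ⊕ Fin m) ℂ := fromCols (-(Δ * H)) (-Δ) with hD
  have hsplit : Terr H L K = Terr H L (Kzero H L) + D := by
    rw [Terr, Terr, hD, fromColumns_add, fromCols_ext_iff]
    constructor
    · rw [hΔ, Matrix.sub_mul]; abel
    · rw [hΔ]; abel
  have hDT0 : D * (Terr H L (Kzero H L))ᴴ = 0 := by
    rw [hD, Terr, fc_mul_ct, L_sub_K0H]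
    simp only [conjTranspose_neg, Matrix.neg_mul, Matrix.mul_neg, neg_neg]
    rw [K0_ct, conjTranspose_mul, Finv_herm, push']
    simp only [Matrix.mul_assoc]
    abel
  have hT0D : Terr H L (Kzero H L) * Dᴴ = 0 := by
    have h := congrArg Matrix.conjTranspose hDT0
    rwa [conjTranspose_mul, conjTranspose_conjTranspose, conjTranspose_zero] at h
  have hDD : D * Dᴴ = Δ * (1 + H * Hᴴ) * Δᴴ := by
    rw [hD, fc_mul_ct]
    simp only [conjTranspose_neg, Matrix.neg_mul, Matrix.mul_neg, neg_neg, conjTranspose_mul]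
    rw [Matrix.mul_add, Matrix.mul_one, Matrix.add_mul]
    simp only [Matrix.mul_assoc]
    abel
  rw [hsplit, conjTranspose_add, Matrix.add_mul, Matrix.mul_add, Matrix.mul_add, hT0D, hDT0,
    hDD, TJ_T0]
  abel

end RegretAux

open RegretAux

/-- for `γ > 0`, `T_K* T_K - T_{K₀}* T_{K₀} ⪯ γ² I` iff
`(K - K₀)(I + H H*)(K - K₀)* ⪯ γ² (I + γ⁻² L (I + H* H)⁻¹ L*)⁻¹`. -/
theorem regret_condition_reduction {m n p : ℕ}
    (H : Matrix (Fin m) (Fin n) ℂ) (L : Matrix (Fin p) (Fin n) ℂ)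
    (K : Matrix (Fin p) (Fin m) ℂ) (γ : ℝ) (hγ : 0 < γ) :
    ((γ ^ 2 : ℂ) • (1 : Matrix (Fin n ⊕ Fin m) (Fin n ⊕ Fin m) ℂ)
        - ((Terr H L K)ᴴ * Terr H L K
            - (Terr H L (Kzero H L))ᴴ * Terr H L (Kzero H L))).PosSemidef
      ↔ ((γ ^ 2 : ℂ) • (1 + (γ ^ 2 : ℂ)⁻¹ • (L * (1 + Hᴴ * H)⁻¹ * Lᴴ))⁻¹
          - (K - Kzero H L) * (1 + H * Hᴴ) * (K - Kzero H L)ᴴ).PosSemidef := by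
  classical
  set c : ℂ := (γ ^ 2 : ℂ) with hcdef
  have hc2 : c = ((γ ^ 2 : ℝ) : ℂ) := by rw [hcdef]; push_cast; ring
  have hcpos : 0 < c := by
    rw [hc2]
    exact_mod_cast pow_pos hγ 2
  have hcle : 0 ≤ c := hcpos.le
  have hcne : c ≠ 0 := hcpos.ne'
  have hcinv_le : 0 ≤ c⁻¹ := by
    rw [hc2, ← Complex.ofReal_inv]
    exact_mod_cast inv_nonneg.mpr (pow_pos hγ 2).le
  set T0 : Matrix (Fin p) (Fin n ⊕ Fin m) ℂ := Terr H L (Kzero H L) with hT0def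
  set TK : Matrix (Fin p) (Fin n ⊕ Fin m) ℂ := Terr H L K with hTKdef
  set P : Matrix (Fin p) (Fin p) ℂ := L * (1 + Hᴴ * H)⁻¹ * Lᴴ with hPdef
  set Q : Matrix (Fin p) (Fin p) ℂ := (K - Kzero H L) * (1 + H * Hᴴ) * (K - Kzero H L)ᴴ with hQdef
  have hPpsd : P.PosSemidef := (posDef_F H).inv.posSemidef.mul_mul_conjTranspose_same L
  have hPherm : Pᴴ = P := hPpsd.1.eq
  set S : Matrix (Fin p) (Fin p) ℂ := c • 1 + P with hSdef
  have hSpd : S.PosDef := (smul_one_posDef hcpos).add_posSemidef hPpsd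
  have hSu : IsUnit S.det := (Matrix.isUnit_iff_isUnit_det _).mp hSpd.isUnit
  have hSSi : S * S⁻¹ = 1 := Matrix.mul_nonsing_inv _ hSu
  have hSiS : S⁻¹ * S = 1 := Matrix.nonsing_inv_mul _ hSu
  set A : Matrix (Fin n ⊕ Fin m) (Fin n ⊕ Fin m) ℂ := c • 1 + T0ᴴ * T0 with hAdef
  have hApd : A.PosDef :=
    (smul_one_posDef hcpos).add_posSemidef (Matrix.posSemidef_conjTranspose_mul_self T0)
  letI : Invertible A := hApd.isUnit.invertible
  -- products
  have hT0T0 : T0 * T0ᴴ = P := TJ_T0 H L (Kzero H L)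
  have hTKT0 : TK * T0ᴴ = P := TJ_T0 H L K
  have hT0TK : T0 * TKᴴ = P := by
    have h := congrArg Matrix.conjTranspose hTKT0
    rwa [conjTranspose_mul, conjTranspose_conjTranspose, hPherm] at h
  have hTT : TK * TKᴴ = P + Q := TK_TK H L K
  -- inverse of A
  have hAT0 : A * T0ᴴ = T0ᴴ * S := by
    rw [hAdef, hSdef, Matrix.add_mul, Matrix.mul_add, Matrix.smul_mul, Matrix.mul_smul,
      Matrix.one_mul, Matrix.mul_one, Matrix.mul_assoc, hT0T0]
  have hAinv : A⁻¹ = c⁻¹ • (1 - T0ᴴ * (S⁻¹ * T0)) := by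
    apply Matrix.inv_eq_right_inv
    rw [Matrix.mul_smul, Matrix.mul_sub, Matrix.mul_one, ← Matrix.mul_assoc, hAT0,
      Matrix.mul_assoc, ← Matrix.mul_assoc S, hSSi, Matrix.one_mul]
    rw [hAdef, add_sub_cancel_right, smul_smul, inv_mul_cancel₀ hcne, one_smul]
  -- key quantity
  have hkey : TK * A⁻¹ * TKᴴ = c⁻¹ • (P + Q - P * (S⁻¹ * P)) := by
    rw [hAinv, Matrix.mul_smul, Matrix.smul_mul, Matrix.mul_sub, Matrix.mul_one,
      Matrix.sub_mul, hTT]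
    rw [← Matrix.mul_assoc TK T0ᴴ (S⁻¹ * T0), hTKT0, Matrix.mul_assoc P (S⁻¹ * T0) TKᴴ,
      Matrix.mul_assoc S⁻¹ T0 TKᴴ, hT0TK]
  -- commutation of P with S⁻¹
  have hSP : S * P = P * S := by
    rw [hSdef, Matrix.add_mul, Matrix.mul_add, Matrix.smul_mul, Matrix.mul_smul,
      Matrix.one_mul, Matrix.mul_one]
  have hPSinv : P * S⁻¹ = S⁻¹ * P := by
    calc P * S⁻¹ = (S⁻¹ * S) * (P * S⁻¹) := by rw [hSiS, Matrix.one_mul]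
      _ = S⁻¹ * ((S * P) * S⁻¹) := by simp only [Matrix.mul_assoc]
      _ = S⁻¹ * (P * (S * S⁻¹)) := by rw [hSP, Matrix.mul_assoc]
      _ = S⁻¹ * P := by rw [hSSi, Matrix.mul_one]
  -- the scalar identity  c•1 - P + P S⁻¹ P = c² S⁻¹
  have hD : c • (1 : Matrix (Fin p) (Fin p) ℂ) - P + P * (S⁻¹ * P) = (c * c) • S⁻¹ := by
    have hXS : (c • (1 : Matrix (Fin p) (Fin p) ℂ) - P + P * (S⁻¹ * P)) * S
        = ((c * c) • S⁻¹) * S := by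
      rw [Matrix.add_mul, Matrix.sub_mul, Matrix.smul_mul, Matrix.one_mul]
      rw [Matrix.mul_assoc P, Matrix.mul_assoc S⁻¹, ← hSP, ← Matrix.mul_assoc S⁻¹, hSiS,
        Matrix.one_mul]
      rw [Matrix.smul_mul, hSiS]
      rw [hSdef, smul_add, Matrix.add_mul, Matrix.smul_mul, Matrix.one_mul, smul_smul]
      abel
    calc c • (1 : Matrix (Fin p) (Fin p) ℂ) - P + P * (S⁻¹ * P)
        = ((c • (1 : Matrix (Fin p) (Fin p) ℂ) - P + P * (S⁻¹ * P)) * S) * S⁻¹ := by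
          rw [Matrix.mul_assoc _ S S⁻¹, hSSi, Matrix.mul_one]
      _ = (((c * c) • S⁻¹) * S) * S⁻¹ := by rw [hXS]
      _ = (c * c) • S⁻¹ := by rw [Matrix.mul_assoc _ S S⁻¹, hSSi, Matrix.mul_one]
  -- identification of the RHS matrix
  have hinv2 : (1 + c⁻¹ • P)⁻¹ = c • S⁻¹ := by
    apply Matrix.inv_eq_right_inv
    rw [Matrix.add_mul, Matrix.one_mul, Matrix.smul_mul, Matrix.mul_smul, smul_smul,
      inv_mul_cancel₀ hcne, one_smul]
    have e : c • S⁻¹ + P * S⁻¹ = (c • 1 + P) * S⁻¹ := by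
      rw [Matrix.add_mul, Matrix.smul_mul, Matrix.one_mul]
    rw [e, ← hSdef, hSSi]
  have hRHS : c • (1 + c⁻¹ • P)⁻¹ - Q = c • ((1 : Matrix (Fin p) (Fin p) ℂ) - TK * A⁻¹ * TKᴴ) := by
    rw [hinv2, hkey, smul_sub, smul_smul, smul_smul, mul_inv_cancel₀ hcne, one_smul, ← hD]
    abel
  -- Schur complement equivalences
  have hL1 : c • (1 : Matrix (Fin n ⊕ Fin m) (Fin n ⊕ Fin m) ℂ) - (TKᴴ * TK - T0ᴴ * T0)
      = A - TKᴴ * (1 : Matrix (Fin p) (Fin p) ℂ)⁻¹ * (TKᴴ)ᴴ := by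
    rw [inv_one, Matrix.mul_one, conjTranspose_conjTranspose, hAdef]
    abel
  have e1 : (c • (1 : Matrix (Fin n ⊕ Fin m) (Fin n ⊕ Fin m) ℂ)
      - (TKᴴ * TK - T0ᴴ * T0)).PosSemidef
      ↔ ((1 : Matrix (Fin p) (Fin p) ℂ) - (TKᴴ)ᴴ * A⁻¹ * TKᴴ).PosSemidef := by
    haveI : Invertible (1 : Matrix (Fin p) (Fin p) ℂ) := invertibleOne
    rw [hL1, ← Matrix.PosDef.fromBlocks₂₂ A TKᴴ Matrix.PosDef.one,
      Matrix.PosDef.fromBlocks₁₁ TKᴴ 1 hApd]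
  rw [conjTranspose_conjTranspose] at e1
  constructor
  · intro h
    rw [hRHS]
    exact smul_psd hcle (e1.mp h)
  · intro h
    apply e1.mpr
    rw [hRHS] at h
    have h2 := smul_psd hcinv_le h
    rwa [smul_smul, inv_mul_cancel₀ hcne, one_smul] at h2
end

section
/- Spectral factorization identity (finite-dimensional verification at a point): if P solves P = G G* + F P F* − F P H*(I + H P H*)^{-1} H P F*, then for any complex z with |z| = 1 and z not an eigenvalue of F, defining H(z) = H (zI − F)^{-1} G and Δ(z) = (I + H (zI − F)^{-1} K_P)(I + H P H*)^{1/2} with K_P = F P H*(I + H P H*)^{-1}, we have Δ(z) Δ(z)* = I + H(z) H(z)*. -/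
open Matrix
open scoped ComplexOrder

/-- The positive semidefinite square root of a positive semidefinite matrix, as defined in
Mathlib (December 2024); removed from current Mathlib. -/
noncomputable def Matrix.PosSemidef.sqrt {n : Type*} [Fintype n] [DecidableEq n] {𝕜 : Type*}
    [RCLike 𝕜] {A : Matrix n n 𝕜} (hA : A.PosSemidef) : Matrix n n 𝕜 :=
  (hA.1.eigenvectorUnitary : Matrix n n 𝕜) *
    diagonal (((↑) : ℝ → 𝕜) ∘ (√·) ∘ hA.1.eigenvalues) *
    (star hA.1.eigenvectorUnitary : Matrix n n 𝕜)

theorem Matrix.PosSemidef.posSemidef_sqrt {n : Type*} [Fintype n] [DecidableEq n] {𝕜 : Type*}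
    [RCLike 𝕜] {A : Matrix n n 𝕜} (hA : A.PosSemidef) : hA.sqrt.PosSemidef := by
  unfold Matrix.PosSemidef.sqrt
  have hd : (diagonal (((↑) : ℝ → 𝕜) ∘ (√·) ∘ hA.1.eigenvalues)).PosSemidef := by
    rw [Matrix.posSemidef_diagonal_iff]
    intro i
    simp [Real.sqrt_nonneg]
  have := hd.mul_mul_conjTranspose_same (hA.1.eigenvectorUnitary : Matrix n n 𝕜)
  simpa [Matrix.star_eq_conjTranspose] using this

theorem Matrix.PosSemidef.sqrt_mul_self {n : Type*} [Fintype n] [DecidableEq n] {𝕜 : Type*}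
    [RCLike 𝕜] {A : Matrix n n 𝕜} (hA : A.PosSemidef) : hA.sqrt * hA.sqrt = A := by
  unfold Matrix.PosSemidef.sqrt
  conv_rhs => rw [hA.1.spectral_theorem, Unitary.conjStarAlgAut_apply]
  have hU : (star hA.1.eigenvectorUnitary : Matrix n n 𝕜) * (hA.1.eigenvectorUnitary : Matrix n n 𝕜) = 1 :=
    Unitary.coe_star_mul_self _
  calc _ = (hA.1.eigenvectorUnitary : Matrix n n 𝕜) *
      (diagonal (((↑) : ℝ → 𝕜) ∘ (√·) ∘ hA.1.eigenvalues) *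
      ((star hA.1.eigenvectorUnitary : Matrix n n 𝕜) * (hA.1.eigenvectorUnitary : Matrix n n 𝕜)) *
      diagonal (((↑) : ℝ → 𝕜) ∘ (√·) ∘ hA.1.eigenvalues)) *
      (star hA.1.eigenvectorUnitary : Matrix n n 𝕜) := by simp only [Matrix.mul_assoc]
    _ = _ := by
      rw [hU, Matrix.mul_one, diagonal_mul_diagonal]
      congr 3
      funext i
      simp only [Function.comp_apply]
      rw [← RCLike.ofReal_mul, Real.mul_self_sqrt (hA.eigenvalues_nonneg i)]

set_option maxHeartbeats 2000000 in
/-- spectral factorization at a point of the unit circle: if `P ⪰ 0` solves the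
Riccati equation, `|z| = 1` and `z` is not an eigenvalue of `F`, then with
`H(z) = H (zI − F)⁻¹ G`, `K_P = F P H*(I + H P H*)⁻¹`, and
`Δ(z) = (I + H (zI − F)⁻¹ K_P)(I + H P H*)^{1/2}` (positive semidefinite square root),
we have `Δ(z) Δ(z)* = I + H(z) H(z)*`. -/
theorem spectral_factorization_at_point {n q m : ℕ}
    (F : Matrix (Fin n) (Fin n) ℂ) (G : Matrix (Fin n) (Fin q) ℂ)
    (H : Matrix (Fin m) (Fin n) ℂ) (P : Matrix (Fin n) (Fin n) ℂ)
    (hP : P.PosSemidef)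
    (hRic : P = G * Gᴴ + F * P * Fᴴ
        - F * P * Hᴴ * (1 + H * P * Hᴴ)⁻¹ * H * P * Fᴴ)
    (hPD : (1 + H * P * Hᴴ).PosSemidef)
    (z : ℂ) (hz : ‖z‖ = 1) (hzF : IsUnit (z • (1 : Matrix (Fin n) (Fin n) ℂ) - F)) :
    letI Hz := H * (z • (1 : Matrix (Fin n) (Fin n) ℂ) - F)⁻¹ * G
    letI KP := F * P * Hᴴ * (1 + H * P * Hᴴ)⁻¹
    letI Δz := (1 + H * (z • (1 : Matrix (Fin n) (Fin n) ℂ) - F)⁻¹ * KP) * hPD.sqrt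
    Δz * Δzᴴ = 1 + Hz * Hzᴴ := by
  have hRH : hPD.sqrtᴴ = hPD.sqrt := hPD.posSemidef_sqrt.1
  have hR : hPD.sqrt * hPD.sqrt = 1 + H * P * Hᴴ := hPD.sqrt_mul_self
  generalize hg : hPD.sqrt = R at hRH hR ⊢
  set A : Matrix (Fin n) (Fin n) ℂ := z • 1 - F with hAdef
  set S : Matrix (Fin m) (Fin m) ℂ := 1 + H * P * Hᴴ with hSdef
  clear_value A S
  -- basic facts
  have hSpd : S.PosDef := hSdef ▸ Matrix.PosDef.one.add_posSemidef (hP.mul_mul_conjTranspose_same H)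
  have hSu : IsUnit S.det := (Matrix.isUnit_iff_isUnit_det S).mp hSpd.isUnit
  have hAu : IsUnit A.det := (Matrix.isUnit_iff_isUnit_det A).mp hzF
  have hAHu : IsUnit (Aᴴ).det := by rw [Matrix.det_conjTranspose]; exact hAu.star
  have hSH : Sᴴ = S := hPD.1
  have hSinvH : (S⁻¹)ᴴ = S⁻¹ := by rw [Matrix.conjTranspose_nonsing_inv, hSH]
  have hAinvH : (A⁻¹)ᴴ = (Aᴴ)⁻¹ := Matrix.conjTranspose_nonsing_inv A
  have c1 : ∀ {k} (X : Matrix (Fin n) (Fin k) ℂ), A⁻¹ * (A * X) = X := by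
    intro k X; rw [← Matrix.mul_assoc, Matrix.nonsing_inv_mul A hAu, Matrix.one_mul]
  have c2 : ∀ {k} (X : Matrix (Fin n) (Fin k) ℂ), Aᴴ * ((Aᴴ)⁻¹ * X) = X := by
    intro k X; rw [← Matrix.mul_assoc, Matrix.mul_nonsing_inv _ hAHu, Matrix.one_mul]
  have c3 : ∀ {k} (X : Matrix (Fin m) (Fin k) ℂ), S * (S⁻¹ * X) = X := by
    intro k X; rw [← Matrix.mul_assoc, Matrix.mul_nonsing_inv _ hSu, Matrix.one_mul]
  have c4 : ∀ {k} (X : Matrix (Fin m) (Fin k) ℂ), S⁻¹ * (S * X) = X := by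
    intro k X; rw [← Matrix.mul_assoc, Matrix.nonsing_inv_mul _ hSu, Matrix.one_mul]
  have c3' : S * S⁻¹ = 1 := Matrix.mul_nonsing_inv _ hSu
  have c4' : S⁻¹ * S = 1 := Matrix.nonsing_inv_mul _ hSu
  have c1' : A⁻¹ * A = 1 := Matrix.nonsing_inv_mul _ hAu
  have c2' : Aᴴ * (Aᴴ)⁻¹ = 1 := Matrix.mul_nonsing_inv _ hAHu
  -- unit modulus
  have hzz : z * (starRingEnd ℂ) z = 1 := by
    rw [Complex.mul_conj]
    norm_cast
    rw [Complex.normSq_eq_norm_sq, hz]; norm_num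
  have hAH : Aᴴ = (starRingEnd ℂ) z • 1 - Fᴴ := by
    rw [hAdef, Matrix.conjTranspose_sub, Matrix.conjTranspose_smul, Matrix.conjTranspose_one]
    rfl
  -- the key Lyapunov-type identity
  have hzz' : (starRingEnd ℂ) z * z = 1 := by rw [mul_comm]; exact hzz
  have key : A * P * Aᴴ + F * P * Aᴴ + A * P * Fᴴ = P - F * P * Fᴴ := by
    rw [hAH, hAdef]
    simp only [Matrix.sub_mul, Matrix.mul_sub, Matrix.smul_mul, Matrix.mul_smul,
      Matrix.one_mul, Matrix.mul_one, smul_smul, hzz, hzz', one_smul, smul_sub]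
    abel
  -- rewrite the Riccati equation
  have h2 : G * Gᴴ = P - F * P * Fᴴ + F * P * Hᴴ * S⁻¹ * H * P * Fᴴ := by
    calc G * Gᴴ
        = (G * Gᴴ + F * P * Fᴴ - F * P * Hᴴ * S⁻¹ * H * P * Fᴴ) - F * P * Fᴴ
            + F * P * Hᴴ * S⁻¹ * H * P * Fᴴ := by abel
      _ = P - F * P * Fᴴ + F * P * Hᴴ * S⁻¹ * H * P * Fᴴ := by rw [← hRic]
  have Ric' : G * Gᴴ = A * P * Aᴴ + F * P * Aᴴ + A * P * Fᴴ
      + F * P * Hᴴ * S⁻¹ * H * P * Fᴴ := by rw [h2, ← key]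
  -- normalize RHS
  have hGG : H * A⁻¹ * G * (H * A⁻¹ * G)ᴴ = H * A⁻¹ * (G * Gᴴ) * ((Aᴴ)⁻¹ * Hᴴ) := by
    simp [Matrix.conjTranspose_mul, hAinvH, Matrix.mul_assoc]
  have hPH : Pᴴ = P := hP.1
  rw [hGG, Ric']
  -- handle the square root on the LHS
  rw [Matrix.conjTranspose_mul _ R, hRH, Matrix.mul_assoc _ R,
    ← Matrix.mul_assoc R R, hR]
  simp only [Matrix.conjTranspose_mul, Matrix.conjTranspose_add, Matrix.conjTranspose_one,
    hAinvH, hSinvH, hPH, Matrix.conjTranspose_conjTranspose, Matrix.add_mul, Matrix.mul_add,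
    Matrix.mul_one, Matrix.one_mul, Matrix.mul_assoc, c1, c2, c3, c4, c1', c2', c3', c4']
  rw [hSdef]
  simp only [Matrix.add_mul, Matrix.mul_add, Matrix.one_mul, Matrix.mul_one, Matrix.mul_assoc]
  abel
end
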